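/- arXiv:1707.01212 — 2 statements merged into one kernel-verified Lean document; each statement's English description precedes it below -/
import Mathlib

section
/- Single-step comparison of ProtoDash and ProtoGreedy: let L ⊆ {1,…,n} be a proper subset and let v ∉ L satisfy (μ − Kζ^L)_v ≥ (μ − Kζ^L)_j for all j ∉ L (the ProtoDash choice). Then for every u ∉ L, f(L∪{v}) − f(L) ≥ (3c/(4C̃₁)) · (f(L∪{u}) − f(L)), where C̃₁ = max_{1≤j≤n} K_{jj}. -/
open Finset Matrix

noncomputable section

/-- The objective `l(w) = ⟨μ, w⟩ - (1/2) ⟨w, K w⟩`. -/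
def obj {n : ℕ} (K : Matrix (Fin n) (Fin n) ℝ) (μ : Fin n → ℝ) (w : Fin n → ℝ) : ℝ :=
  μ ⬝ᵥ w - (1 / 2) * (w ⬝ᵥ (K *ᵥ w))

/-- The feasible set `Ω_L = {w : w ≥ 0, w_j = 0 for j ∉ L}`. -/
def feas {n : ℕ} (L : Finset (Fin n)) : Set (Fin n → ℝ) :=
  {w | (∀ j, 0 ≤ w j) ∧ ∀ j ∉ L, w j = 0}
lemma dot_symm {n : ℕ} {K : Matrix (Fin n) (Fin n) ℝ} (h : K.IsSymm) (x y : Fin n → ℝ) :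
    x ⬝ᵥ (K *ᵥ y) = y ⬝ᵥ (K *ᵥ x) := by
  rw [Matrix.dotProduct_mulVec, ← Matrix.mulVec_transpose, h.eq, dotProduct_comm]

lemma obj_add {n : ℕ} {K : Matrix (Fin n) (Fin n) ℝ} (hsymm : K.IsSymm)
    (μ w d : Fin n → ℝ) :
    obj K μ (w + d) = obj K μ w + ((μ - K *ᵥ w) ⬝ᵥ d) - (1/2) * (d ⬝ᵥ (K *ᵥ d)) := by
  have h1 : w ⬝ᵥ (K *ᵥ d) = d ⬝ᵥ (K *ᵥ w) := dot_symm hsymm w d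
  have h2 : (K *ᵥ w) ⬝ᵥ d = d ⬝ᵥ (K *ᵥ w) := dotProduct_comm _ _
  simp only [obj, Matrix.mulVec_add, add_dotProduct, dotProduct_add,
    sub_dotProduct, h1, h2]
  ring

lemma obj_add_single {n : ℕ} {K : Matrix (Fin n) (Fin n) ℝ} (hsymm : K.IsSymm)
    (μ w : Fin n → ℝ) (t : ℝ) (j : Fin n) :
    obj K μ (w + t • (Pi.single j 1 : Fin n → ℝ))
      = obj K μ w + t * ((μ - K *ᵥ w) j) - (1/2) * (t^2 * K j j) := by
  rw [obj_add hsymm]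
  have h1 : (μ - K *ᵥ w) ⬝ᵥ (t • (Pi.single j 1 : Fin n → ℝ)) = t * ((μ - K *ᵥ w) j) := by
    simp [dotProduct_smul, dotProduct_single]
  have h2 : (t • (Pi.single j 1 : Fin n → ℝ)) ⬝ᵥ (K *ᵥ (t • (Pi.single j 1 : Fin n → ℝ)))
      = t^2 * K j j := by
    simp [Matrix.mulVec_smul, dotProduct_smul, smul_dotProduct,
      Matrix.mulVec_single, single_dotProduct]
    ring
  rw [h1, h2]

lemma single_feas {n : ℕ} {L : Finset (Fin n)} {w : Fin n → ℝ} (hw : w ∈ feas L)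
    {j : Fin n} (hj : j ∈ L) {t : ℝ} (ht : -(w j) ≤ t) :
    w + t • (Pi.single j 1 : Fin n → ℝ) ∈ feas L := by
  obtain ⟨hpos, hzero⟩ := hw
  constructor
  · intro i
    simp only [Pi.add_apply, Pi.smul_apply, Pi.single_apply, smul_eq_mul]
    by_cases h : i = j
    · subst h; simp; linarith
    · simp [h]; exact hpos i
  · intro i hi
    have hij : i ≠ j := fun h => hi (h ▸ hj)
    simp only [Pi.add_apply, Pi.smul_apply, Pi.single_apply, smul_eq_mul]
    simp [hij, hzero i hi]

-- diagonal lower bound from hcK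
lemma diag_ge {n : ℕ} {K : Matrix (Fin n) (Fin n) ℝ} {c : ℝ}
    (hcK : ∀ x : Fin n → ℝ, c * (∑ j, (x j) ^ 2) ≤ x ⬝ᵥ (K *ᵥ x)) (j : Fin n) :
    c ≤ K j j := by
  have := hcK (Pi.single j 1 : Fin n → ℝ)
  have h2 : ((Pi.single j 1 : Fin n → ℝ)) ⬝ᵥ (K *ᵥ (Pi.single j 1 : Fin n → ℝ)) = K j j := by
    simp [Matrix.mulVec_single, single_dotProduct]
  have h3 : (∑ i, ((Pi.single j 1 : Fin n → ℝ) i) ^ 2) = 1 := by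
    simp [Pi.single_apply]
  rw [h2, h3] at this
  linarith

lemma grad_nonpos {n : ℕ} {K : Matrix (Fin n) (Fin n) ℝ} (hsymm : K.IsSymm)
    {μ : Fin n → ℝ} {c : ℝ} (hc : 0 < c)
    (hcK : ∀ x : Fin n → ℝ, c * (∑ j, (x j) ^ 2) ≤ x ⬝ᵥ (K *ᵥ x))
    {L : Finset (Fin n)} {z : Fin n → ℝ} (hmem : z ∈ feas L)
    (hopt : ∀ w ∈ feas L, obj K μ w ≤ obj K μ z)
    {j : Fin n} (hj : j ∈ L) : (μ - K *ᵥ z) j ≤ 0 := by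
  by_contra h
  push_neg at h
  set g := (μ - K *ᵥ z) j
  have hK : 0 < K j j := lt_of_lt_of_le hc (diag_ge hcK j)
  set t := g / K j j with ht
  have htpos : 0 < t := div_pos h hK
  have hfeas : z + t • (Pi.single j 1 : Fin n → ℝ) ∈ feas L :=
    single_feas hmem hj (by nlinarith [hmem.1 j])
  have := hopt _ hfeas
  rw [obj_add_single hsymm] at this
  have : t * g - (1/2) * (t^2 * K j j) ≤ 0 := by linarith
  have heq : t * g - (1/2) * (t^2 * K j j) = g^2 / (2 * K j j) := by
    field_simp [ht]; rw [ht]; field_simp; ring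
  rw [heq] at this
  nlinarith [sq_nonneg g, div_pos (by positivity : (0:ℝ) < g^2) (by positivity : (0:ℝ) < 2 * K j j)]

lemma grad_comp {n : ℕ} {K : Matrix (Fin n) (Fin n) ℝ} (hsymm : K.IsSymm)
    {μ : Fin n → ℝ} {c : ℝ} (hc : 0 < c)
    (hcK : ∀ x : Fin n → ℝ, c * (∑ j, (x j) ^ 2) ≤ x ⬝ᵥ (K *ᵥ x))
    {L : Finset (Fin n)} {z : Fin n → ℝ} (hmem : z ∈ feas L)
    (hopt : ∀ w ∈ feas L, obj K μ w ≤ obj K μ z)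
    {j : Fin n} (hj : j ∈ L) : (μ - K *ᵥ z) j * z j = 0 := by
  rcases eq_or_lt_of_le (hmem.1 j) with hz | hz
  · rw [← hz]; ring
  have hg : (μ - K *ᵥ z) j ≤ 0 := grad_nonpos hsymm hc hcK hmem hopt hj
  rcases eq_or_lt_of_le hg with hg0 | hg0
  · rw [hg0]; ring
  exfalso
  set g := (μ - K *ᵥ z) j
  have hK : 0 < K j j := lt_of_lt_of_le hc (diag_ge hcK j)
  set t := max (-(z j)) (g / K j j) with ht
  have htneg : t < 0 := by
    apply max_lt (by linarith)
    exact div_neg_of_neg_of_pos hg0 hK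
  have hfeas : z + t • (Pi.single j 1 : Fin n → ℝ) ∈ feas L :=
    single_feas hmem hj (le_max_left _ _)
  have hle := hopt _ hfeas
  rw [obj_add_single hsymm] at hle
  have h1 : t * g - (1/2) * (t^2 * K j j) ≤ 0 := by linarith
  -- but t * (g - (1/2)*t*K j j) > 0
  have h2 : g / K j j ≤ t := le_max_right _ _
  have h3 : g - (1/2) * t * K j j ≤ g / 2 := by
    have : g ≤ t * K j j := by
      rw [div_le_iff₀ hK] at h2; linarith
    linarith
  have h4 : 0 < t * (g - (1/2) * t * K j j) :=
    mul_pos_of_neg_of_neg htneg (by linarith)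
  nlinarith [h4]

/-- Single-step comparison of ProtoDash and ProtoGreedy. -/
theorem protodash_step_bound (n : ℕ) (hn : 1 ≤ n)
    (K : Matrix (Fin n) (Fin n) ℝ) (hsymm : K.IsSymm) (hpd : K.PosDef)
    (μ : Fin n → ℝ)
    (ζ : Finset (Fin n) → Fin n → ℝ)
    (hζ : ∀ L : Finset (Fin n),
      ζ L ∈ feas L ∧ ∀ w ∈ feas L, obj K μ w ≤ obj K μ (ζ L))
    (f : Finset (Fin n) → ℝ) (hf : ∀ L : Finset (Fin n), f L = obj K μ (ζ L))
    (c : ℝ) (hc : 0 < c)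
    (hcK : ∀ x : Fin n → ℝ, c * (∑ j, (x j) ^ 2) ≤ x ⬝ᵥ (K *ᵥ x))
    (C₁ : ℝ) (hC₁ub : ∀ j, K j j ≤ C₁) (hC₁mem : ∃ j, C₁ = K j j)
    (L : Finset (Fin n)) (hL : L ≠ Finset.univ)
    (v : Fin n) (hv : v ∉ L)
    (hvmax : ∀ j ∉ L, μ j - (K *ᵥ ζ L) j ≤ μ v - (K *ᵥ ζ L) v) :
    ∀ u ∉ L,
      f (insert v L) - f L ≥ (3 * c / (4 * C₁)) * (f (insert u L) - f L) := by
  intro u hu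
  obtain ⟨hmemL, hoptL⟩ := hζ L
  set z := ζ L with hz
  set g : Fin n → ℝ := μ - K *ᵥ z with hg
  have hgj : ∀ j, g j = μ j - (K *ᵥ z) j := fun j => rfl
  have hKvv : 0 < K v v := lt_of_lt_of_le hc (diag_ge hcK v)
  have hC₁pos : 0 < C₁ := lt_of_lt_of_le hKvv (hC₁ub v)
  set av := max (g v) 0 with hav
  set au := max (g u) 0 with hau
  have havnn : 0 ≤ av := le_max_right _ _
  have haunn : 0 ≤ au := le_max_right _ _
  have hauav : au ≤ av := by
    apply max_le _ havnn
    calc g u ≤ g v := by have := hvmax u hu; simp only [hgj]; exact this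
    _ ≤ av := le_max_left _ _
  -- Lower bound: av^2 ≤ 2*C₁*(f (insert v L) - f L)
  have hlow : av ^ 2 ≤ 2 * C₁ * (f (insert v L) - f L) := by
    obtain ⟨hmemV, hoptV⟩ := hζ (insert v L)
    have hfeasz : z ∈ feas (insert v L) :=
      ⟨hmemL.1, fun j hj => hmemL.2 j (fun h => hj (Finset.mem_insert_of_mem h))⟩
    rcases le_or_gt (g v) 0 with hgv | hgv
    · have hav0 : av = 0 := max_eq_right hgv
      have : f L ≤ f (insert v L) := by
        rw [hf, hf]; exact hoptV z hfeasz
      rw [hav0]; nlinarith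
    · set t := g v / K v v with htdef
      have htpos : 0 < t := div_pos hgv hKvv
      have hfeasw : z + t • (Pi.single v 1 : Fin n → ℝ) ∈ feas (insert v L) := by
        constructor
        · intro i
          simp only [Pi.add_apply, Pi.smul_apply, Pi.single_apply, smul_eq_mul]
          by_cases h : i = v
          · subst h; simp; have := hmemL.1 i; linarith
          · simp [h]; exact hmemL.1 i
        · intro i hi
          have hiv : i ≠ v := fun h => hi (h ▸ Finset.mem_insert_self v L)
          have hiL : i ∉ L := fun h => hi (Finset.mem_insert_of_mem h)
          simp only [Pi.add_apply, Pi.smul_apply, Pi.single_apply, smul_eq_mul]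
          simp [hiv, hmemL.2 i hiL]
      have hle := hoptV _ hfeasw
      rw [obj_add_single hsymm] at hle
      have hΔ : t * g v - (1/2) * (t^2 * K v v) ≤ f (insert v L) - f L := by
        rw [hf, hf]; linarith
      have heq : t * g v - (1/2) * (t^2 * K v v) = (g v)^2 / (2 * K v v) := by
        field_simp [htdef]; rw [htdef]; field_simp; ring
      have hav2 : av = g v := max_eq_left (le_of_lt hgv)
      rw [heq] at hΔ
      have h6 : (g v)^2 ≤ 2 * K v v * (f (insert v L) - f L) := by
        rw [div_le_iff₀ (by positivity : (0:ℝ) < 2 * K v v)] at hΔ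
        linarith
      have hΔnn : 0 ≤ f (insert v L) - f L := by
        nlinarith [sq_nonneg (g v)]
      rw [hav2]
      nlinarith [hC₁ub v]
  -- Upper bound: 2*c*(f (insert u L) - f L) ≤ au^2
  have hup : 2 * c * (f (insert u L) - f L) ≤ au ^ 2 := by
    obtain ⟨hmemU, hoptU⟩ := hζ (insert u L)
    set z' := ζ (insert u L) with hz'
    set d : Fin n → ℝ := z' - z with hd
    have hzd : z + d = z' := by rw [hd]; abel
    have hkey : obj K μ z' = obj K μ z + (g ⬝ᵥ d) - (1/2) * (d ⬝ᵥ (K *ᵥ d)) := by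
      rw [← hzd, obj_add hsymm]
    have hdj : ∀ j, d j = z' j - z j := fun j => rfl
    -- d j = 0 for j ∉ insert u L
    have hdu : 0 ≤ d u := by
      rw [hdj, hmemL.2 u hu]; simpa using hmemU.1 u
    have hgd : g ⬝ᵥ d ≤ au * d u := by
      have hsum : g ⬝ᵥ d = ∑ j, g j * d j := rfl
      rw [hsum]
      have hbound : ∀ j ∈ Finset.univ, g j * d j ≤ if j = u then au * d u else 0 := by
        intro j _
        by_cases hju : j = u
        · subst hju
          simp only [if_pos rfl]
          exact mul_le_mul_of_nonneg_right (le_max_left _ _) hdu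
        · simp only [if_neg hju]
          by_cases hjL : j ∈ L
          · have hcomp : g j * z j = 0 := grad_comp hsymm hc hcK hmemL hoptL hjL
            have hgneg : g j ≤ 0 := grad_nonpos hsymm hc hcK hmemL hoptL hjL
            have : g j * d j = g j * z' j := by rw [hdj]; ring_nf; nlinarith [hcomp]
            rw [this]
            exact mul_nonpos_of_nonpos_of_nonneg hgneg (hmemU.1 j)
          · have : d j = 0 := by
              rw [hdj, hmemL.2 j hjL, hmemU.2 j (by simp [hju, hjL])]
              ring
            rw [this]; simp
      calc ∑ j, g j * d j ≤ ∑ j, if j = u then au * d u else 0 :=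
            Finset.sum_le_sum hbound
        _ = au * d u := by rw [Finset.sum_ite_eq']; simp
    have hquad : c * (d u)^2 ≤ d ⬝ᵥ (K *ᵥ d) := by
      refine le_trans ?_ (hcK d)
      apply mul_le_mul_of_nonneg_left _ (le_of_lt hc)
      exact Finset.single_le_sum (fun j _ => sq_nonneg (d j)) (Finset.mem_univ u)
    have hΔ : f (insert u L) - f L ≤ au * d u - (1/2) * (c * (d u)^2) := by
      rw [hf, hf, ← hz', ← hz, hkey]
      linarith
    nlinarith [sq_nonneg (au - c * d u), mul_le_mul_of_nonneg_left hΔ (by positivity : (0:ℝ) ≤ 2*c)]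
  -- Conclusion
  rw [ge_iff_le, div_mul_eq_mul_div, div_le_iff₀ (by positivity : (0:ℝ) < 4 * C₁)]
  have hΔvnn : 0 ≤ f (insert v L) - f L := by nlinarith [sq_nonneg av]
  nlinarith [mul_le_mul_of_nonneg_right hauav (by linarith : (0:ℝ) ≤ au + av)]
end
end

section
/- Let L ⊆ {1,…,n} and j ∉ L. If ζ^{L∪{j}}_j > 0, then Σ_{i ∈ L} K_{j i} · ζ^{L∪{j}}_i ≤ Σ_{i ∈ L} K_{j i} · ζ^L_i ≤ μ_j. -/
open Finset Matrix

noncomputable section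

lemma sym_dot {n : ℕ} {K : Matrix (Fin n) (Fin n) ℝ} (hs : K.IsSymm)
    (a b : Fin n → ℝ) : a ⬝ᵥ (K *ᵥ b) = b ⬝ᵥ (K *ᵥ a) := by
  conv_lhs => rw [Matrix.dotProduct_mulVec, ← hs.eq, Matrix.vecMul_transpose]
  rw [dotProduct_comm]

lemma obj_expand {n : ℕ} {K : Matrix (Fin n) (Fin n) ℝ} (hs : K.IsSymm)
    (μ ζ d : Fin n → ℝ) (t : ℝ) :
    obj K μ (ζ + t • d) = obj K μ ζ + t * ((μ - K *ᵥ ζ) ⬝ᵥ d)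
      - t ^ 2 / 2 * (d ⬝ᵥ (K *ᵥ d)) := by
  have h1 : ζ ⬝ᵥ (K *ᵥ d) = d ⬝ᵥ (K *ᵥ ζ) := sym_dot hs ζ d
  simp only [obj, mulVec_add, mulVec_smul, dotProduct_add, add_dotProduct,
    dotProduct_smul, smul_dotProduct, sub_dotProduct, smul_eq_mul, h1,
    dotProduct_comm (K *ᵥ ζ) d]
  ring

/-- Variational inequality at a maximizer. -/
lemma vi {n : ℕ} {K : Matrix (Fin n) (Fin n) ℝ} (hs : K.IsSymm)
    (hpsd : ∀ x : Fin n → ℝ, 0 ≤ x ⬝ᵥ (K *ᵥ x))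
    {μ : Fin n → ℝ} {L : Finset (Fin n)} {ζ : Fin n → ℝ}
    (hζ : ζ ∈ feas L ∧ ∀ w ∈ feas L, obj K μ w ≤ obj K μ (ζ))
    {w : Fin n → ℝ} (hw : w ∈ feas L) :
    (μ - K *ᵥ ζ) ⬝ᵥ (w - ζ) ≤ 0 := by
  obtain ⟨⟨hζ0, hζL⟩, hmax⟩ := hζ
  obtain ⟨hw0, hwL⟩ := hw
  set d := w - ζ with hd
  set a := (μ - K *ᵥ ζ) ⬝ᵥ d with ha
  set c := d ⬝ᵥ (K *ᵥ d) with hc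
  have hc0 : 0 ≤ c := hpsd d
  have key : ∀ t : ℝ, 0 < t → t ≤ 1 → a ≤ t / 2 * c := by
    intro t ht0 ht1
    have hfeas : ζ + t • d ∈ feas L := by
      constructor
      · intro i
        have : ζ i + t * (w i - ζ i) = (1 - t) * ζ i + t * w i := by ring
        simp only [Pi.add_apply, Pi.smul_apply, hd, Pi.sub_apply, smul_eq_mul, this]
        have := hζ0 i; have := hw0 i
        nlinarith
      · intro i hi
        simp [hd, hζL i hi, hwL i hi]
    have := hmax _ hfeas
    rw [obj_expand hs μ ζ d t] at this
    have h2 : t * a ≤ t ^ 2 / 2 * c := by linarith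
    nlinarith [mul_pos ht0 ht0]
  by_contra hcon
  push_neg at hcon
  rcases le_or_gt c 0 with h | h
  · have := key 1 one_pos le_rfl; nlinarith
  · have ht : 0 < min 1 (a / c) := lt_min one_pos (div_pos hcon h)
    have := key _ ht (min_le_left _ _)
    have h2 : min 1 (a / c) ≤ a / c := min_le_right _ _
    have h3 : min 1 (a / c) / 2 * c ≤ (a / c) / 2 * c := by
      apply mul_le_mul_of_nonneg_right _ h.le
      linarith
    have h4 : (a / c) / 2 * c = a / 2 := by field_simp
    nlinarith

/-- If the new weight is strictly positive, then
`∑_{i ∈ L} K_{ji} ζ^{L∪{j}}_i ≤ ∑_{i ∈ L} K_{ji} ζ^L_i ≤ μ_j`. -/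
theorem cross_term_bounds (n : ℕ) (hn : 1 ≤ n)
    (K : Matrix (Fin n) (Fin n) ℝ) (hsymm : K.IsSymm) (hpd : K.PosDef)
    (μ : Fin n → ℝ)
    (ζ : Finset (Fin n) → Fin n → ℝ)
    (hζ : ∀ L : Finset (Fin n),
      ζ L ∈ feas L ∧ ∀ w ∈ feas L, obj K μ w ≤ obj K μ (ζ L))
    (f : Finset (Fin n) → ℝ) (hf : ∀ L : Finset (Fin n), f L = obj K μ (ζ L))
    (L : Finset (Fin n)) (j : Fin n) (hj : j ∉ L)
    (hpos : 0 < ζ (insert j L) j) :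
    (∑ i ∈ L, K j i * ζ (insert j L) i ≤ ∑ i ∈ L, K j i * ζ L i) ∧
    (∑ i ∈ L, K j i * ζ L i ≤ μ j) := by
  have hpsd : ∀ x : Fin n → ℝ, 0 ≤ x ⬝ᵥ (K *ᵥ x) := fun x => by
    simpa using hpd.posSemidef.dotProduct_mulVec_nonneg x
  set J := insert j L with hJ
  set ζL := ζ L
  set ζJ := ζ J
  obtain ⟨⟨hL0', hLz'⟩, _⟩ := hζ L
  obtain ⟨⟨hJ0', hJz'⟩, _⟩ := hζ J
  have hL0 : ∀ i, 0 ≤ ζL i := fun i => hL0' i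
  have hLz : ∀ i ∉ L, ζL i = 0 := fun i hi => hLz' i hi
  have hJ0 : ∀ i, 0 ≤ ζJ i := fun i => hJ0' i
  have hJz : ∀ i ∉ J, ζJ i = 0 := fun i hi => hJz' i hi
  have hζLj : ζL j = 0 := hLz j hj
  -- the perturbed vector: ζJ with coordinate j zeroed
  set w' : Fin n → ℝ := fun i => if i = j then 0 else ζJ i with hw'
  have hw'feasL : w' ∈ feas L := by
    constructor
    · intro i; by_cases h : i = j <;> simp [hw', h, hJ0 i]
    · intro i hi
      by_cases h : i = j
      · simp [hw', h]
      · have : i ∉ J := by simp [hJ, h, hi]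
        simp [hw', h, hJz i this]
  have hw'feasJ : w' ∈ feas J := by
    refine ⟨hw'feasL.1, fun i hi => ?_⟩
    exact hw'feasL.2 i (fun h => hi (Finset.mem_insert_of_mem h))
  have hζLfeasJ : ζL ∈ feas J := by
    refine ⟨hL0, fun i hi => hLz i (fun h => hi (Finset.mem_insert_of_mem h))⟩
  set u := w' - ζL with hu
  set d := ζJ - ζL with hd
  -- u vanishes off L
  have huz : ∀ i, i ∉ L → u i = 0 := fun i hi => by
    simp [hu, hw'feasL.2 i hi, hLz i hi]
  have hduj : d = u + (ζJ j) • (Pi.single j 1 : Fin n → ℝ) := by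
    funext i
    by_cases h : i = j
    · subst h; simp [hd, hu, hw', hζLj]
    · simp [hd, hu, hw', h, Pi.single_eq_of_ne h]
  have hdot : ∀ g : Fin n → ℝ, g ⬝ᵥ d = g ⬝ᵥ u + ζJ j * g j := by
    intro g
    rw [hduj, dotProduct_add, dotProduct_smul]
    simp [dotProduct_single, mul_comm]
  -- variational inequalities
  have h1 : (μ - K *ᵥ ζL) ⬝ᵥ (w' - ζL) ≤ 0 := vi hsymm hpsd (hζ L) hw'feasL
  have h2 : (μ - K *ᵥ ζJ) ⬝ᵥ (ζL - ζJ) ≤ 0 := vi hsymm hpsd (hζ J) hζLfeasJ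
  have h4 : (μ - K *ᵥ ζJ) ⬝ᵥ (w' - ζJ) ≤ 0 := vi hsymm hpsd (hζ J) hw'feasJ
  have h3 : (μ - K *ᵥ ζJ) ⬝ᵥ ((ζJ + Pi.single j 1) - ζJ) ≤ 0 := by
    refine vi hsymm hpsd (hζ J) ⟨fun i => ?_, fun i hi => ?_⟩
    · by_cases h : i = j
      · subst h; simp [hJ0 i]; positivity
      · simp [Pi.single_eq_of_ne h, hJ0 i]
    · have hij : i ≠ j := fun h => hi (h ▸ Finset.mem_insert_self j L)
      simp [Pi.single_eq_of_ne hij, hJz i hi]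
  -- stationarity: (μ - KζJ) j = 0
  have h3' : (μ - K *ᵥ ζJ) j ≤ 0 := by
    have : (ζJ + Pi.single j 1) - ζJ = Pi.single j 1 := by ring_nf
    rw [this] at h3
    simpa [dotProduct_single] using h3
  have hw'J : w' - ζJ = -(ζJ j) • (Pi.single j 1 : Fin n → ℝ) := by
    funext i
    by_cases h : i = j
    · subst h; simp [hw']
    · simp [hw', h, Pi.single_eq_of_ne h]
  have h4' : 0 ≤ (μ - K *ᵥ ζJ) j := by
    rw [hw'J, dotProduct_smul] at h4
    simp only [dotProduct_single, smul_eq_mul, mul_one] at h4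
    nlinarith
  have hstat : (μ - K *ᵥ ζJ) j = 0 := le_antisymm h3' h4'
  -- g_J ⬝ d ≥ 0
  have h2' : 0 ≤ (μ - K *ᵥ ζJ) ⬝ᵥ d := by
    have : (μ - K *ᵥ ζJ) ⬝ᵥ (ζL - ζJ) = -((μ - K *ᵥ ζJ) ⬝ᵥ d) := by
      rw [hd, ← dotProduct_neg]; congr 1; ring_nf
    rw [this] at h2; linarith
  have h1' : (μ - K *ᵥ ζL) ⬝ᵥ u ≤ 0 := h1
  -- difference of gradients
  have hgd : (μ - K *ᵥ ζL) - (μ - K *ᵥ ζJ) = K *ᵥ d := by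
    rw [hd, mulVec_sub]; ring_nf
  -- Part 1 core: (K *ᵥ u) j ≤ 0
  have hKdu : (K *ᵥ d) ⬝ᵥ u ≤ 0 := by
    have e1 : (μ - K *ᵥ ζJ) ⬝ᵥ u = (μ - K *ᵥ ζJ) ⬝ᵥ d - ζJ j * (μ - K *ᵥ ζJ) j := by
      rw [hdot]; ring
    have e2 : 0 ≤ (μ - K *ᵥ ζJ) ⬝ᵥ u := by rw [e1, hstat]; linarith
    have e3 : (K *ᵥ d) ⬝ᵥ u = (μ - K *ᵥ ζL) ⬝ᵥ u - (μ - K *ᵥ ζJ) ⬝ᵥ u := by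
      rw [← sub_dotProduct, hgd]
    linarith
  have hKuj : (K *ᵥ u) j ≤ 0 := by
    have e1 : (K *ᵥ d) ⬝ᵥ u = u ⬝ᵥ (K *ᵥ u) + ζJ j * (K *ᵥ u) j := by
      rw [dotProduct_comm, sym_dot hsymm u (K := K) d,
        dotProduct_comm d, hdot, dotProduct_comm (K *ᵥ u) u]
    have e2 := hpsd u
    nlinarith
  -- Part 2 core: 0 ≤ (μ - K *ᵥ ζL) j
  have hgLj : 0 ≤ (μ - K *ᵥ ζL) j := by
    have e0 : 0 ≤ d ⬝ᵥ (K *ᵥ d) := hpsd d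
    have e1 : (μ - K *ᵥ ζL) ⬝ᵥ d - (μ - K *ᵥ ζJ) ⬝ᵥ d = (K *ᵥ d) ⬝ᵥ d := by
      rw [← sub_dotProduct, hgd]
    have e2 : (K *ᵥ d) ⬝ᵥ d = d ⬝ᵥ (K *ᵥ d) := dotProduct_comm _ _
    have e3 : (μ - K *ᵥ ζL) ⬝ᵥ d = (μ - K *ᵥ ζL) ⬝ᵥ u + ζJ j * (μ - K *ᵥ ζL) j :=
      hdot _
    nlinarith
  -- translate to sums
  have hsumu : (K *ᵥ u) j = ∑ i ∈ L, K j i * u i := by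
    rw [mulVec, dotProduct]
    rw [← Finset.sum_subset (Finset.subset_univ L)]
    intro i _ hi
    rw [huz i hi, mul_zero]
  have hsumL : (K *ᵥ ζL) j = ∑ i ∈ L, K j i * ζL i := by
    rw [mulVec, dotProduct]
    rw [← Finset.sum_subset (Finset.subset_univ L)]
    intro i _ hi
    rw [hLz i hi, mul_zero]
  have hui : ∀ i ∈ L, u i = ζJ i - ζL i := by
    intro i hi
    have : i ≠ j := fun h => hj (h ▸ hi)
    simp [hu, hw', this]
  constructor
  · have : ∑ i ∈ L, K j i * u i = ∑ i ∈ L, K j i * ζJ i - ∑ i ∈ L, K j i * ζL i := by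
      rw [← Finset.sum_sub_distrib]
      refine Finset.sum_congr rfl fun i hi => ?_
      rw [hui i hi]; ring
    rw [hsumu, this] at hKuj
    linarith
  · have : (μ - K *ᵥ ζL) j = μ j - ∑ i ∈ L, K j i * ζL i := by
      rw [Pi.sub_apply, hsumL]
    rw [this] at hgLj
    linarith
end
end
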